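/- The Clifford torus T = {(x₁,x₂,x₃,x₄) ∈ S³ : x₁² + x₂² = 1/2, x₃² + x₄² = 1/2} is a minimal surface in the round 3-sphere S³ ⊂ ℝ⁴: its mean curvature vector with respect to the induced metric from S³ vanishes. -/
import Mathlib


noncomputable section
open Real

/-- Partial derivative in the first variable. -/
def d1 (g : ℝ → ℝ → ℝ) (x y : ℝ) : ℝ := deriv (fun s => g s y) x

/-- Partial derivative in the second variable. -/
def d2 (g : ℝ → ℝ → ℝ) (x y : ℝ) : ℝ := deriv (fun t => g x t) y

/-- Components of the Clifford torus parametrization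
`(φ₁,φ₂) ↦ (cos φ₁/√2, sin φ₁/√2, cos φ₂/√2, sin φ₂/√2)` in `ℝ⁴`. -/
def Y1 (p q : ℝ) : ℝ := Real.cos p / Real.sqrt 2
def Y2 (p q : ℝ) : ℝ := Real.sin p / Real.sqrt 2
def Y3 (p q : ℝ) : ℝ := Real.cos q / Real.sqrt 2
def Y4 (p q : ℝ) : ℝ := Real.sin q / Real.sqrt 2

/-- Components of the unit normal `ν` of the Clifford torus inside `S³`. -/
def N1 (p q : ℝ) : ℝ := Real.cos p / Real.sqrt 2
def N2 (p q : ℝ) : ℝ := Real.sin p / Real.sqrt 2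
def N3 (p q : ℝ) : ℝ := -(Real.cos q / Real.sqrt 2)
def N4 (p q : ℝ) : ℝ := -(Real.sin q / Real.sqrt 2)

lemma sq2 : Real.sqrt 2 ^ 2 = 2 := Real.sq_sqrt (by norm_num)

lemma d1Y1 : d1 Y1 = fun p _ => -Real.sin p / Real.sqrt 2 := by
  funext p q; simp [d1, Y1, deriv_div_const, neg_div]
lemma d1Y2 : d1 Y2 = fun p _ => Real.cos p / Real.sqrt 2 := by
  funext p q; simp [d1, Y2, deriv_div_const]
lemma d1Y3 : d1 Y3 = fun _ _ => 0 := by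
  funext p q; simp [d1, Y3]
lemma d1Y4 : d1 Y4 = fun _ _ => 0 := by
  funext p q; simp [d1, Y4]
lemma d2Y1 : d2 Y1 = fun _ _ => 0 := by
  funext p q; simp [d2, Y1]
lemma d2Y2 : d2 Y2 = fun _ _ => 0 := by
  funext p q; simp [d2, Y2]
lemma d2Y3 : d2 Y3 = fun _ q => -Real.sin q / Real.sqrt 2 := by
  funext p q; simp [d2, Y3, deriv_div_const, neg_div]
lemma d2Y4 : d2 Y4 = fun _ q => Real.cos q / Real.sqrt 2 := by
  funext p q; simp [d2, Y4, deriv_div_const]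

lemma d1d1Y1 : ∀ p q, d1 (d1 Y1) p q = -Real.cos p / Real.sqrt 2 := by
  intro p q; rw [d1Y1]; simp [d1, deriv_div_const, neg_div]
lemma d1d1Y2 : ∀ p q, d1 (d1 Y2) p q = -Real.sin p / Real.sqrt 2 := by
  intro p q; rw [d1Y2]; simp [d1, deriv_div_const, neg_div]
lemma d1d1Y3 : ∀ p q, d1 (d1 Y3) p q = 0 := by
  intro p q; rw [d1Y3]; simp [d1]
lemma d1d1Y4 : ∀ p q, d1 (d1 Y4) p q = 0 := by
  intro p q; rw [d1Y4]; simp [d1]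
lemma d2d1Y1 : ∀ p q, d2 (d1 Y1) p q = 0 := by
  intro p q; rw [d1Y1]; simp [d2]
lemma d2d1Y2 : ∀ p q, d2 (d1 Y2) p q = 0 := by
  intro p q; rw [d1Y2]; simp [d2]
lemma d2d1Y3 : ∀ p q, d2 (d1 Y3) p q = 0 := by
  intro p q; rw [d1Y3]; simp [d2]
lemma d2d1Y4 : ∀ p q, d2 (d1 Y4) p q = 0 := by
  intro p q; rw [d1Y4]; simp [d2]
lemma d2d2Y1 : ∀ p q, d2 (d2 Y1) p q = 0 := by
  intro p q; rw [d2Y1]; simp [d2]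
lemma d2d2Y2 : ∀ p q, d2 (d2 Y2) p q = 0 := by
  intro p q; rw [d2Y2]; simp [d2]
lemma d2d2Y3 : ∀ p q, d2 (d2 Y3) p q = -Real.cos q / Real.sqrt 2 := by
  intro p q; rw [d2Y3]; simp [d2, deriv_div_const, neg_div]
lemma d2d2Y4 : ∀ p q, d2 (d2 Y4) p q = -Real.sin q / Real.sqrt 2 := by
  intro p q; rw [d2Y4]; simp [d2, deriv_div_const, neg_div]

lemma A1 : ∀ p q : ℝ, d1 (fun p (_ : ℝ) => -Real.sin p / Real.sqrt 2) p q = -Real.cos p / Real.sqrt 2 := by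
  intro p q; simp [d1, deriv_div_const, neg_div]
lemma A2 : ∀ p q : ℝ, d1 (fun p (_ : ℝ) => Real.cos p / Real.sqrt 2) p q = -Real.sin p / Real.sqrt 2 := by
  intro p q; simp [d1, deriv_div_const, neg_div]
lemma B3 : ∀ p q : ℝ, d2 (fun (_ : ℝ) q => -Real.sin q / Real.sqrt 2) p q = -Real.cos q / Real.sqrt 2 := by
  intro p q; simp [d2, deriv_div_const, neg_div]
lemma B4 : ∀ p q : ℝ, d2 (fun (_ : ℝ) q => Real.cos q / Real.sqrt 2) p q = -Real.sin q / Real.sqrt 2 := by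
  intro p q; simp [d2, deriv_div_const, neg_div]
lemma Z1 : ∀ p q : ℝ, d1 (fun (_ _ : ℝ) => (0:ℝ)) p q = 0 := by intro p q; simp [d1]
lemma Z2 : ∀ p q : ℝ, d2 (fun (_ _ : ℝ) => (0:ℝ)) p q = 0 := by intro p q; simp [d2]
lemma Z3 : ∀ p q : ℝ, d2 (fun p (_ : ℝ) => -Real.sin p / Real.sqrt 2) p q = 0 := by intro p q; simp [d2]
lemma Z4 : ∀ p q : ℝ, d2 (fun p (_ : ℝ) => Real.cos p / Real.sqrt 2) p q = 0 := by intro p q; simp [d2]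
lemma Z5 : ∀ p q : ℝ, d1 (fun (_ : ℝ) q => -Real.sin q / Real.sqrt 2) p q = 0 := by intro p q; simp [d1]
lemma Z6 : ∀ p q : ℝ, d1 (fun (_ : ℝ) q => Real.cos q / Real.sqrt 2) p q = 0 := by intro p q; simp [d1]

/-- The Clifford torus `{x ∈ S³ : x₁²+x₂² = 1/2, x₃²+x₄² = 1/2}` is a minimal
surface in the round `S³`: `ν` is a unit vector tangent to `S³` (orthogonal to
the position vector), normal to the torus, and the trace of the second
fundamental form of the torus in `S³` (with respect to the induced metric)
vanishes. -/
theorem cliffordTorus_minimal_in_S3 (p q : ℝ) :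
    -- the parametrization lies in S³
    ((Y1 p q) ^ 2 + (Y2 p q) ^ 2 + (Y3 p q) ^ 2 + (Y4 p q) ^ 2 = 1) ∧
    -- ν is a unit vector
    ((N1 p q) ^ 2 + (N2 p q) ^ 2 + (N3 p q) ^ 2 + (N4 p q) ^ 2 = 1) ∧
    -- ν is tangent to S³ : ν ⟂ position vector
    (N1 p q * Y1 p q + N2 p q * Y2 p q + N3 p q * Y3 p q + N4 p q * Y4 p q = 0) ∧
    -- ν is normal to the torus
    (N1 p q * d1 Y1 p q + N2 p q * d1 Y2 p q + N3 p q * d1 Y3 p q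
      + N4 p q * d1 Y4 p q = 0) ∧
    (N1 p q * d2 Y1 p q + N2 p q * d2 Y2 p q + N3 p q * d2 Y3 p q
      + N4 p q * d2 Y4 p q = 0) ∧
    -- the trace γ^{ij} K_{ij} of the second fundamental form in S³ vanishes
    (let g11 := (d1 Y1 p q) ^ 2 + (d1 Y2 p q) ^ 2 + (d1 Y3 p q) ^ 2 + (d1 Y4 p q) ^ 2
     let g22 := (d2 Y1 p q) ^ 2 + (d2 Y2 p q) ^ 2 + (d2 Y3 p q) ^ 2 + (d2 Y4 p q) ^ 2
     let g12 := d1 Y1 p q * d2 Y1 p q + d1 Y2 p q * d2 Y2 p q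
       + d1 Y3 p q * d2 Y3 p q + d1 Y4 p q * d2 Y4 p q
     let K11 := N1 p q * d1 (d1 Y1) p q + N2 p q * d1 (d1 Y2) p q
       + N3 p q * d1 (d1 Y3) p q + N4 p q * d1 (d1 Y4) p q
     let K12 := N1 p q * d2 (d1 Y1) p q + N2 p q * d2 (d1 Y2) p q
       + N3 p q * d2 (d1 Y3) p q + N4 p q * d2 (d1 Y4) p q
     let K22 := N1 p q * d2 (d2 Y1) p q + N2 p q * d2 (d2 Y2) p q
       + N3 p q * d2 (d2 Y3) p q + N4 p q * d2 (d2 Y4) p q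
     (g22 * K11 - 2 * g12 * K12 + g11 * K22) / (g11 * g22 - g12 ^ 2) = 0) := by
  have hs : Real.sqrt 2 ^ 2 = 2 := sq2
  have hp := Real.sin_sq_add_cos_sq p
  have hq := Real.sin_sq_add_cos_sq q
  have h2 : (Real.sqrt 2) ≠ 0 := by positivity
  refine ⟨?_, ?_, ?_, ?_, ?_, ?_⟩
  · simp only [Y1, Y2, Y3, Y4, div_pow, hs]; nlinarith
  · simp only [N1, N2, N3, N4]
    field_simp
    nlinarith [hp, hq, hs]
  · simp only [N1, N2, N3, N4, Y1, Y2, Y3, Y4]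
    field_simp
    nlinarith [hp, hq, hs]
  · simp only [N1, N2, N3, N4, d1Y1, d1Y2, d1Y3, d1Y4]; ring
  · simp only [N1, N2, N3, N4, d2Y1, d2Y2, d2Y3, d2Y4]; ring
  · simp only [d1d1Y1 p q, d1d1Y2 p q, d1d1Y3 p q, d1d1Y4 p q,
      d2d1Y1 p q, d2d1Y2 p q, d2d1Y3 p q, d2d1Y4 p q,
      d2d2Y1 p q, d2d2Y2 p q, d2d2Y3 p q, d2d2Y4 p q,
      N1, N2, N3, N4, d1Y1, d1Y2, d1Y3, d1Y4, d2Y1, d2Y2, d2Y3, d2Y4,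
      A1 p q, A2 p q, B3 p q, B4 p q, Z1 p q, Z2 p q, Z3 p q, Z4 p q, Z5 p q, Z6 p q]
    field_simp
    nlinarith [hp, hq, hs]
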